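/- A triangle-free simple graph on m vertices with at least ⌊m²/4⌋ − (⌊m/2⌋ − 2) edges is bipartite. -/

import Mathlib

open Finset SimpleGraph

lemma div4 (a b : ℕ) (hb : b < 4) : (4*a+b)/4 = a := by
  rw [Nat.mul_add_div (by norm_num)]; omega

lemma arith1 (n : ℕ) : n^2/4 = (n-1)^2/4 + n/2 := by
  rcases n with _ | m
  · simp
  · have h : m + 1 - 1 = m := rfl
    rw [h]
    rcases Nat.even_or_odd m with ⟨k, rfl⟩ | ⟨k, rfl⟩
    · have e1 : (k+k+1)^2 = 4*(k^2+k)+1 := by ring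
      have e2 : (k+k)^2 = 4*(k^2)+0 := by ring
      rw [e1, e2, div4 _ _ (by norm_num), div4 _ _ (by norm_num)]
      omega
    · have e1 : (2*k+1+1)^2 = 4*((k+1)^2)+0 := by ring
      have e2 : (2*k+1)^2 = 4*(k^2+k)+1 := by ring
      rw [e1, e2, div4 _ _ (by norm_num), div4 _ _ (by norm_num)]
      have : (k+1)^2 = k^2 + 2*k + 1 := by ring
      omega

lemma arith2 (a b : ℕ) : a*b ≤ (a+b)^2/4 := by
  rw [Nat.le_div_iff_mul_le (by norm_num)]
  nlinarith [two_mul_le_add_sq a b]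

lemma arith3 (a b : ℕ) (ha : 1 ≤ a) (hb : 1 ≤ b) : a + b ≤ a*b + 1 := by
  obtain ⟨a, rfl⟩ := Nat.exists_eq_add_of_le ha
  obtain ⟨b, rfl⟩ := Nat.exists_eq_add_of_le hb
  nlinarith

lemma key : ∀ (n : ℕ) (V : Type) [Fintype V] [DecidableEq V] (G : SimpleGraph V)
    [DecidableRel G.Adj], Fintype.card V = n → G.CliqueFree 3 → ¬G.Colorable 2 →
    G.edgeFinset.card + n/2 ≤ n^2/4 + 1 := by
  intro n
  induction n using Nat.strong_induction_on with
  | _ n IH =>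
  intro V _ _ G _ hcard htf hnc
  classical
  -- V is nonempty
  have hne : Nonempty V := by
    by_contra h
    have he : IsEmpty V := not_nonempty_iff.mp h
    exact hnc ⟨⟨fun v => (he.false v).elim, fun {a} _ => (he.false a).elim⟩⟩
  have hn1 : 1 ≤ n := by rw [← hcard]; exact Fintype.card_pos
  -- minimum degree vertex
  obtain ⟨x0⟩ := hne
  obtain ⟨v, -, hv⟩ := Finset.exists_min_image (univ : Finset V) (fun w => G.degree w) ⟨x0, mem_univ _⟩
  set d := G.degree v with hd
  -- Step A : 2d < n
  have hdn : 2 * d + 1 ≤ n := by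
    by_contra h
    push_neg at h
    have h2 : n ≤ 2 * d := by omega
    have hd1 : 1 ≤ d := by omega
    obtain ⟨u, hu⟩ := Finset.card_pos.mp (by
      rw [card_neighborFinset_eq_degree]; omega : 0 < (G.neighborFinset v).card)
    rw [mem_neighborFinset] at hu
    have hdisj : Disjoint (G.neighborFinset v) (G.neighborFinset u) := by
      rw [Finset.disjoint_left]
      intro w hwv hwu
      rw [mem_neighborFinset] at hwv hwu
      exact htf {v, u, w} (is3Clique_triple_iff.mpr ⟨hu, hwv, hwu⟩)
    have hcover : G.neighborFinset v ∪ G.neighborFinset u = univ := by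
      apply Finset.eq_univ_of_card
      have h3 := Finset.card_le_univ (G.neighborFinset v ∪ G.neighborFinset u)
      rw [Finset.card_union_of_disjoint hdisj] at h3 ⊢
      rw [card_neighborFinset_eq_degree, card_neighborFinset_eq_degree] at h3 ⊢
      have h4 : d ≤ G.degree u := hv u (mem_univ u)
      rw [hcard] at h3 ⊢
      omega
    apply hnc
    refine ⟨⟨fun x => if x ∈ G.neighborFinset v then 0 else 1, ?_⟩⟩
    intro a b hab heq
    by_cases ha : a ∈ G.neighborFinset v <;> by_cases hb : b ∈ G.neighborFinset v
    · rw [mem_neighborFinset] at ha hb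
      exact htf {v, a, b} (is3Clique_triple_iff.mpr ⟨ha, hb, hab⟩)
    · simp [ha, hb] at heq
    · simp [ha, hb] at heq
    · have ha' : a ∈ G.neighborFinset u := by
        have := mem_univ a; rw [← hcover, Finset.mem_union] at this; tauto
      have hb' : b ∈ G.neighborFinset u := by
        have := mem_univ b; rw [← hcover, Finset.mem_union] at this; tauto
      rw [mem_neighborFinset] at ha' hb'
      exact htf {u, a, b} (is3Clique_triple_iff.mpr ⟨ha', hb', hab⟩)
  -- the induced subgraph on the complement of v
  set s : Set V := {v}ᶜ with hs
  haveI : DecidableRel (G.induce s).Adj := fun a b => inferInstanceAs (Decidable (G.Adj a b))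
  have hcard' : Fintype.card ↥s = n - 1 := by
    have h1 : Fintype.card ↥s = Fintype.card {x : V // ¬ x = v} :=
      Fintype.card_congr (Equiv.subtypeEquivRight (by simp [hs]))
    rw [h1, Fintype.card_subtype_compl, Fintype.card_subtype_eq, hcard]
  -- counting pairs
  set ALL := (univ.filter fun (x, y) => G.Adj x y) with hALLdef
  have hALL : 2 * G.edgeFinset.card = ALL.card := by
    rw [two_mul_card_edgeFinset]
  set AVOID := (univ.filter fun (p : V × V) => G.Adj p.1 p.2 ∧ p.1 ≠ v ∧ p.2 ≠ v) with hAVOIDdef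
  have hNcard : (G.neighborFinset v).card = d := card_neighborFinset_eq_degree G v
  have hsplit : ALL.card ≤ d + d + AVOID.card := by
    have hsub : ALL ⊆ ({v} ×ˢ G.neighborFinset v) ∪ ((G.neighborFinset v) ×ˢ {v}) ∪ AVOID := by
      intro p hp
      rw [hALLdef, Finset.mem_filter] at hp
      obtain ⟨-, hadj⟩ := hp
      simp only [Finset.mem_union, Finset.mem_product, Finset.mem_singleton,
        mem_neighborFinset, hAVOIDdef, Finset.mem_filter, mem_univ, true_and]
      by_cases h1 : p.1 = v
      · exact Or.inl (Or.inl ⟨h1, by rw [← h1]; exact hadj⟩)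
      · by_cases h2 : p.2 = v
        · exact Or.inl (Or.inr ⟨by rw [← h2]; exact hadj.symm, h2⟩)
        · exact Or.inr ⟨hadj, h1, h2⟩
    calc ALL.card ≤ _ := Finset.card_le_card hsub
      _ ≤ (({v} ×ˢ G.neighborFinset v) ∪ ((G.neighborFinset v) ×ˢ {v})).card + AVOID.card :=
          Finset.card_union_le _ _
      _ ≤ ({v} ×ˢ G.neighborFinset v).card + ((G.neighborFinset v) ×ˢ {v}).card + AVOID.card := by
          have := Finset.card_union_le ({v} ×ˢ G.neighborFinset v) ((G.neighborFinset v) ×ˢ {v})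
          omega
      _ ≤ d + d + AVOID.card := by
          rw [Finset.card_product, Finset.card_product, Finset.card_singleton, hNcard]
          omega
  have harith := arith1 n
  by_cases hcol : (G.induce s).Colorable 2
  · -- branch 2 : the induced graph is 2-colorable
    obtain ⟨C⟩ := hcol
    set c : V → Fin 2 :=
      fun x => if h : x = v then 1 else C ⟨x, Set.mem_compl_singleton_iff.mpr h⟩ with hcdef
    have hcv : c v = 1 := by simp [hcdef]
    have hcx : ∀ (x : V) (h : x ≠ v), c x = C ⟨x, Set.mem_compl_singleton_iff.mpr h⟩ :=
      fun x h => dif_neg h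
    have hcadj : ∀ x y, G.Adj x y → x ≠ v → y ≠ v → c x ≠ c y := by
      intro x y hxy hx hy
      rw [hcx x hx, hcx y hy]
      exact C.valid hxy
    have hfin2 : ∀ x : Fin 2, x ≠ 0 → x = 1 := by decide
    have hfin2' : ∀ x : Fin 2, x ≠ 1 → x = 0 := by decide
    set N := G.neighborFinset v with hN
    have hmemN : ∀ x ∈ N, x ≠ v ∧ G.Adj v x := by
      intro x hx
      rw [hN, mem_neighborFinset] at hx
      exact ⟨(G.ne_of_adj hx).symm, hx⟩
    set NA := N.filter (fun x => c x = 0) with hNAdef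
    set NB := N.filter (fun x => c x = 1) with hNBdef
    have hsplitN : NA.card + NB.card = d := by
      rw [hNAdef, hNBdef, ← hNcard]
      have h1 := Finset.card_filter_add_card_filter_not (s := N) (p := fun x => c x = 0)
      have h2 : N.filter (fun x => c x = 1) = N.filter (fun x => ¬ (c x = 0)) := by
        apply Finset.filter_congr
        intro x _
        have h3 : ∀ y : Fin 2, (y = 1 ↔ ¬ (y = 0)) := by decide
        simp [h3]
      rw [h2]
      exact h1
    have hNAne : NA.Nonempty := by
      rw [Finset.nonempty_iff_ne_empty]
      intro h
      have hall : ∀ x ∈ N, c x = 1 := by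
        intro x hx
        refine hfin2 _ (fun h0 => ?_)
        have : x ∈ NA := by rw [hNAdef]; exact Finset.mem_filter.mpr ⟨hx, h0⟩
        rw [h] at this
        exact absurd this (Finset.notMem_empty x)
      apply hnc
      refine ⟨⟨fun x => if x = v then 0 else c x, ?_⟩⟩
      intro a b hab heq
      beta_reduce at heq
      by_cases ha : a = v <;> by_cases hb : b = v
      · exact G.ne_of_adj hab (ha.trans hb.symm)
      · rw [if_pos ha, if_neg hb] at heq
        have hbN : b ∈ N := by rw [hN, mem_neighborFinset, ← ha]; exact hab
        rw [hall b hbN] at heq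
        exact absurd heq (by decide)
      · rw [if_neg ha, if_pos hb] at heq
        have haN : a ∈ N := by rw [hN, mem_neighborFinset, ← hb]; exact hab.symm
        rw [hall a haN] at heq
        exact absurd heq (by decide)
      · rw [if_neg ha, if_neg hb] at heq
        exact hcadj a b hab ha hb heq
    have hNBne : NB.Nonempty := by
      rw [Finset.nonempty_iff_ne_empty]
      intro h
      have hall : ∀ x ∈ N, c x = 0 := by
        intro x hx
        refine hfin2' _ (fun h1 => ?_)
        have : x ∈ NB := by rw [hNBdef]; exact Finset.mem_filter.mpr ⟨hx, h1⟩
        rw [h] at this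
        exact absurd this (Finset.notMem_empty x)
      apply hnc
      refine ⟨⟨c, ?_⟩⟩
      intro a b hab heq
      by_cases ha : a = v <;> by_cases hb : b = v
      · exact G.ne_of_adj hab (ha.trans hb.symm)
      · have hbN : b ∈ N := by rw [hN, mem_neighborFinset, ← ha]; exact hab
        rw [ha, hcv, hall b hbN] at heq
        exact absurd heq (by decide)
      · have haN : a ∈ N := by rw [hN, mem_neighborFinset, ← hb]; exact hab.symm
        rw [hb, hcv, hall a haN] at heq
        exact absurd heq (by decide)
      · exact hcadj a b hab ha hb heq
    set A := univ.filter (fun x => x ≠ v ∧ c x = 0) with hAdef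
    set B := univ.filter (fun x => x ≠ v ∧ c x = 1) with hBdef
    have hABcard : A.card + B.card ≤ n - 1 := by
      have hdisjAB : Disjoint A B := by
        rw [Finset.disjoint_left]
        intro x hx hy
        rw [hAdef, Finset.mem_filter] at hx
        rw [hBdef, Finset.mem_filter] at hy
        exact absurd (hx.2.2.symm.trans hy.2.2) (by decide)
      have hsub : A ∪ B ⊆ univ.erase v := by
        intro x hx
        rw [Finset.mem_union] at hx
        rw [Finset.mem_erase]
        rcases hx with hx | hx
        · rw [hAdef, Finset.mem_filter] at hx; exact ⟨hx.2.1, mem_univ x⟩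
        · rw [hBdef, Finset.mem_filter] at hx; exact ⟨hx.2.1, mem_univ x⟩
      have h1 := Finset.card_le_card hsub
      rw [Finset.card_union_of_disjoint hdisjAB, Finset.card_erase_of_mem (mem_univ v),
        card_univ, hcard] at h1
      exact h1
    have hNAsub : NA ⊆ A := by
      intro x hx
      rw [hNAdef, Finset.mem_filter] at hx
      rw [hAdef, Finset.mem_filter]
      exact ⟨mem_univ x, (hmemN x hx.1).1, hx.2⟩
    have hNBsub : NB ⊆ B := by
      intro x hx
      rw [hNBdef, Finset.mem_filter] at hx
      rw [hBdef, Finset.mem_filter]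
      exact ⟨mem_univ x, (hmemN x hx.1).1, hx.2⟩
    set P0 := univ.filter (fun p : V × V => G.Adj p.1 p.2 ∧ p.1 ≠ v ∧ p.2 ≠ v ∧ c p.1 = 0)
      with hP0def
    set P1 := univ.filter (fun p : V × V => G.Adj p.1 p.2 ∧ p.1 ≠ v ∧ p.2 ≠ v ∧ c p.1 = 1)
      with hP1def
    have hP0bound : P0.card + NA.card * NB.card ≤ A.card * B.card := by
      have hsub : P0 ∪ NA ×ˢ NB ⊆ A ×ˢ B := by
        intro p hp
        rw [Finset.mem_union] at hp
        rw [Finset.mem_product]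
        rcases hp with hp | hp
        · rw [hP0def, Finset.mem_filter] at hp
          obtain ⟨-, hadj, h1, h2, hc0⟩ := hp
          constructor
          · rw [hAdef, Finset.mem_filter]; exact ⟨mem_univ _, h1, hc0⟩
          · rw [hBdef, Finset.mem_filter]
            refine ⟨mem_univ _, h2, hfin2 _ (fun h0 => ?_)⟩
            exact hcadj p.1 p.2 hadj h1 h2 (hc0.trans h0.symm)
        · rw [Finset.mem_product] at hp
          exact ⟨hNAsub hp.1, hNBsub hp.2⟩
      have hdisj : Disjoint P0 (NA ×ˢ NB) := by
        rw [Finset.disjoint_left]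
        intro p hp hp'
        rw [hP0def, Finset.mem_filter] at hp
        rw [Finset.mem_product] at hp'
        have h1 := (hmemN p.1 (Finset.mem_of_mem_filter _ (by rw [hNAdef] at hp'; exact hp'.1))).2
        have h2 := (hmemN p.2 (Finset.mem_of_mem_filter _ (by rw [hNBdef] at hp'; exact hp'.2))).2
        exact htf {v, p.1, p.2} (is3Clique_triple_iff.mpr ⟨h1, h2, hp.2.1⟩)
      have := Finset.card_le_card hsub
      rw [Finset.card_union_of_disjoint hdisj, Finset.card_product, Finset.card_product] at this
      exact this
    have hP1bound : P1.card + NA.card * NB.card ≤ A.card * B.card := by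
      have hsub : P1 ∪ NB ×ˢ NA ⊆ B ×ˢ A := by
        intro p hp
        rw [Finset.mem_union] at hp
        rw [Finset.mem_product]
        rcases hp with hp | hp
        · rw [hP1def, Finset.mem_filter] at hp
          obtain ⟨-, hadj, h1, h2, hc1⟩ := hp
          constructor
          · rw [hBdef, Finset.mem_filter]; exact ⟨mem_univ _, h1, hc1⟩
          · rw [hAdef, Finset.mem_filter]
            refine ⟨mem_univ _, h2, hfin2' _ (fun h0 => ?_)⟩
            exact hcadj p.1 p.2 hadj h1 h2 (hc1.trans h0.symm)
        · rw [Finset.mem_product] at hp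
          exact ⟨hNBsub hp.1, hNAsub hp.2⟩
      have hdisj : Disjoint P1 (NB ×ˢ NA) := by
        rw [Finset.disjoint_left]
        intro p hp hp'
        rw [hP1def, Finset.mem_filter] at hp
        rw [Finset.mem_product] at hp'
        have h1 := (hmemN p.1 (Finset.mem_of_mem_filter _ (by rw [hNBdef] at hp'; exact hp'.1))).2
        have h2 := (hmemN p.2 (Finset.mem_of_mem_filter _ (by rw [hNAdef] at hp'; exact hp'.2))).2
        exact htf {v, p.1, p.2} (is3Clique_triple_iff.mpr ⟨h1, h2, hp.2.1⟩)
      have := Finset.card_le_card hsub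
      rw [Finset.card_union_of_disjoint hdisj, Finset.card_product, Finset.card_product,
        Nat.mul_comm NB.card NA.card, Nat.mul_comm B.card A.card] at this
      exact this
    have hAVsub : AVOID.card ≤ P0.card + P1.card := by
      have hsub : AVOID ⊆ P0 ∪ P1 := by
        intro p hp
        rw [hAVOIDdef, Finset.mem_filter] at hp
        obtain ⟨-, hadj, h1, h2⟩ := hp
        rw [Finset.mem_union]
        by_cases hc0 : c p.1 = 0
        · exact Or.inl (by rw [hP0def, Finset.mem_filter]; exact ⟨mem_univ _, hadj, h1, h2, hc0⟩)
        · exact Or.inr (by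
            rw [hP1def, Finset.mem_filter]
            exact ⟨mem_univ _, hadj, h1, h2, hfin2 _ hc0⟩)
      exact le_trans (Finset.card_le_card hsub) (Finset.card_union_le _ _)
    have habn : A.card * B.card ≤ (n-1)^2/4 :=
      le_trans (arith2 A.card B.card) (Nat.div_le_div_right (Nat.pow_le_pow_left hABcard 2))
    have hprod := arith3 NA.card NB.card hNAne.card_pos hNBne.card_pos
    obtain ⟨X, hX⟩ : ∃ X, NA.card * NB.card = X := ⟨_, rfl⟩
    obtain ⟨Y, hY⟩ : ∃ Y, A.card * B.card = Y := ⟨_, rfl⟩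
    obtain ⟨F, hF⟩ : ∃ F, (n-1)^2/4 = F := ⟨_, rfl⟩
    obtain ⟨Q, hQ⟩ : ∃ Q, n^2/4 = Q := ⟨_, rfl⟩
    rw [hX, hY] at hP0bound hP1bound
    rw [hX] at hprod
    rw [hY, hF] at habn
    rw [hF, hQ] at harith
    rw [hQ]
    omega

  · -- branch 1: induced graph also not 2-colorable; use induction hypothesis
    have htf' : (G.induce s).CliqueFree 3 := htf.comap ⟨(SimpleGraph.Embedding.induce s).toCopy⟩
    have hIH := IH (n-1) (by omega) ↥s (G.induce s) hcard' htf' hcol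
    haveI hsne : Nonempty ↥s := by
      by_contra h
      have he : IsEmpty ↥s := not_nonempty_iff.mp h
      exact hcol ⟨⟨fun v => (he.false v).elim, fun {a} _ => (he.false a).elim⟩⟩
    set ALL' := (univ.filter fun (x, y) => (G.induce s).Adj x y) with hALL'def
    have hALL' : 2 * (G.induce s).edgeFinset.card = ALL'.card := by
      rw [two_mul_card_edgeFinset]
    have hAV : AVOID.card ≤ ALL'.card := by
      apply Finset.card_le_card_of_injOn
        (fun p => (if h : p.1 ∈ s then (⟨p.1, h⟩ : ↥s) else Classical.arbitrary _,
                   if h : p.2 ∈ s then (⟨p.2, h⟩ : ↥s) else Classical.arbitrary _))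
      · intro p hp
        simp only [Finset.mem_coe, hAVOIDdef, Finset.mem_filter] at hp
        obtain ⟨-, hadj, h1, h2⟩ := hp
        have h1' : p.1 ∈ s := Set.mem_compl_singleton_iff.mpr h1
        have h2' : p.2 ∈ s := Set.mem_compl_singleton_iff.mpr h2
        rw [Finset.mem_coe, hALL'def, Finset.mem_filter]
        refine ⟨mem_univ _, ?_⟩
        simp only [dif_pos h1', dif_pos h2']
        exact hadj
      · intro p hp q hq hpq
        simp only [hAVOIDdef, Finset.mem_coe, Finset.mem_filter] at hp hq
        obtain ⟨-, -, hp1, hp2⟩ := hp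
        obtain ⟨-, -, hq1, hq2⟩ := hq
        have hp1' : p.1 ∈ s := Set.mem_compl_singleton_iff.mpr hp1
        have hp2' : p.2 ∈ s := Set.mem_compl_singleton_iff.mpr hp2
        have hq1' : q.1 ∈ s := Set.mem_compl_singleton_iff.mpr hq1
        have hq2' : q.2 ∈ s := Set.mem_compl_singleton_iff.mpr hq2
        simp only [dif_pos hp1', dif_pos hp2', dif_pos hq1', dif_pos hq2', Prod.mk.injEq,
          Subtype.mk.injEq] at hpq
        exact Prod.ext hpq.1 hpq.2
    -- arithmetic conclusion
    set e := G.edgeFinset.card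
    set e' := (G.induce s).edgeFinset.card
    set q1 := n^2/4
    set q2 := (n-1)^2/4
    omega


lemma fin3_aux : ∀ a b x y : Fin 3, a ≠ b → x ≠ a → x ≠ b → y ≠ a → y ≠ b → x = y := by decide

lemma small3 (G : SimpleGraph (Fin 3)) [DecidableRel G.Adj] (htf : G.CliqueFree 3) :
    G.Colorable 2 := by
  have hcol : ∀ (a b : Fin 3), a ≠ b → ¬ G.Adj a b → G.Colorable 2 := by
    intro a b hab hnadj
    refine ⟨⟨fun x => if x = a ∨ x = b then 0 else 1, ?_⟩⟩
    intro x y hxy heq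
    beta_reduce at heq
    by_cases hx : x = a ∨ x = b <;> by_cases hy : y = a ∨ y = b
    · rcases hx with rfl | rfl <;> rcases hy with rfl | rfl
      · exact G.ne_of_adj hxy rfl
      · exact hnadj hxy
      · exact hnadj hxy.symm
      · exact G.ne_of_adj hxy rfl
    · rw [if_pos hx, if_neg hy] at heq; exact absurd heq (by decide)
    · rw [if_neg hx, if_pos hy] at heq; exact absurd heq (by decide)
    · push_neg at hx hy
      exact G.ne_of_adj hxy (fin3_aux a b x y hab hx.1 hx.2 hy.1 hy.2)
  by_cases h01 : G.Adj 0 1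
  · by_cases h02 : G.Adj 0 2
    · by_cases h12 : G.Adj 1 2
      · exact absurd (is3Clique_triple_iff.mpr ⟨h01, h02, h12⟩) (htf {0, 1, 2})
      · exact hcol 1 2 (by decide) h12
    · exact hcol 0 2 (by decide) h02
  · exact hcol 0 1 (by decide) h01

/-- A triangle-free simple graph on `m` vertices with at least
`⌊m²/4⌋ − (⌊m/2⌋ − 2)` edges is bipartite (i.e. 2-colorable). -/
theorem stmt8 (m : ℕ) (G : SimpleGraph (Fin m)) [DecidableRel G.Adj]
    (htf : G.CliqueFree 3)
    (he : m ^ 2 / 4 - (m / 2 - 2) ≤ G.edgeFinset.card) :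
    G.Colorable 2 := by
  rcases Nat.lt_or_ge m 4 with hm | hm
  · interval_cases m
    · exact ⟨⟨fun _ => 0, fun {a b} h => absurd (Subsingleton.elim a b) (G.ne_of_adj h)⟩⟩
    · exact ⟨⟨fun _ => 0, fun {a b} h => absurd (Subsingleton.elim a b) (G.ne_of_adj h)⟩⟩
    · exact ⟨⟨fun x => x, fun {a b} h => G.ne_of_adj h⟩⟩
    · exact small3 G htf
  · by_contra hnc
    have hkey := key m (Fin m) G (Fintype.card_fin m) htf hnc
    have h2 : 2*m ≤ m^2 := by nlinarith
    have h3 : 2*m/4 ≤ m^2/4 := Nat.div_le_div_right h2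
    omega
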